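/- Let A ∈ 𝓡 be a fixed set and let X^(1), X^(2) be independent random vectors in [0,∞)^d with distributions F_1, F_2 ∈ (𝓓 ∩ 𝓐)_A respectively. Then P[X^(1) + X^(2) ∈ xA] ~ F_1(xA) + F_2(xA) as x → ∞, and the distribution F_1*F_2 of the sum X^(1) + X^(2) belongs to (𝓓 ∩ 𝓐)_A. -/

import Mathlib

open MeasureTheory ProbabilityTheory Filter Topology
open scoped Pointwise

namespace Paper

variable {d : ℕ} {Ω : Type*} [MeasurableSpace Ω]

/-- The family `𝓡` of open, increasing sets with convex complement, bounded away from `0`. -/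
structure IsRSet (d : ℕ) (A : Set (Fin d → ℝ)) : Prop where
  isOpen : IsOpen A
  increasing : ∀ u ∈ A, ∀ v : Fin d → ℝ, (∀ i, 0 ≤ v i) → u + v ∈ A
  convex_compl : Convex ℝ Aᶜ
  zero_notMem_closure : (0 : Fin d → ℝ) ∉ closure A

/-- `Y_A(z) = sup { u > 0 : z ∈ u A }`. -/
noncomputable def suprA (A : Set (Fin d → ℝ)) (z : Fin d → ℝ) : ℝ :=
  sSup {u : ℝ | 0 < u ∧ z ∈ u • A}

/-- `F_A`, the distribution of `Y_A = suprA A ∘ X` under `P`. -/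
noncomputable def FA (P : Measure Ω) (A : Set (Fin d → ℝ)) (X : Ω → Fin d → ℝ) :
    Measure ℝ :=
  P.map (fun ω => suprA A (X ω))

/-- `F (x A) = P[X ∈ x A]` as a real number. -/
noncomputable def vTail (P : Measure Ω) (A : Set (Fin d → ℝ)) (X : Ω → Fin d → ℝ)
    (x : ℝ) : ℝ :=
  (P {ω | X ω ∈ x • A}).toReal

/-- Tail `ν(x, ∞)` of a measure on `ℝ`, as a real number. -/
noncomputable def mTail (ν : Measure ℝ) (x : ℝ) : ℝ := (ν (Set.Ioi x)).toReal

/-- Convolution of two measures on `ℝ`. -/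
noncomputable def mConv (μ ν : Measure ℝ) : Measure ℝ :=
  (μ.prod ν).map (fun p => p.1 + p.2)

/-- `n`-fold convolution power. -/
noncomputable def mConvN (ν : Measure ℝ) : ℕ → Measure ℝ
  | 0 => Measure.dirac 0
  | n + 1 => mConv (mConvN ν n) ν

/-- Long-tailed class `𝓛`. -/
def MemL (ν : Measure ℝ) : Prop :=
  ∀ a : ℝ, 0 < a → Tendsto (fun x => mTail ν (x - a) / mTail ν x) atTop (𝓝 1)

/-- Subexponential class `𝓢`. -/
def MemS (ν : Measure ℝ) : Prop :=
  Tendsto (fun x => mTail (mConv ν ν) x / mTail ν x) atTop (𝓝 2)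

/-- Dominatedly varying class `𝓓`. -/
def MemD (ν : Measure ℝ) : Prop :=
  ∀ y : ℝ, 0 < y → y < 1 → ∃ C : ℝ, ∀ᶠ x in atTop, mTail ν (y * x) / mTail ν x ≤ C

/-- Positively decreasing class `𝓟𝓓`. -/
def MemPD (ν : Measure ℝ) : Prop :=
  ∀ b : ℝ, 1 < b → ∃ c : ℝ, c < 1 ∧ ∀ᶠ x in atTop, mTail ν (b * x) / mTail ν x ≤ c

/-- Consistently varying class `𝓒`. -/
def MemC (ν : Measure ℝ) : Prop :=
  Tendsto (fun b : ℝ => Filter.liminf (fun x => mTail ν (b * x) / mTail ν x) atTop)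
    (nhdsWithin 1 (Set.Ioi 1)) (𝓝 1)

/-- `𝓐 = 𝓢 ∩ 𝓟𝓓`. -/
def MemA (ν : Measure ℝ) : Prop := MemS ν ∧ MemPD ν

/-- `𝓣 = 𝓛 ∩ 𝓟𝓓`. -/
def MemT (ν : Measure ℝ) : Prop := MemL ν ∧ MemPD ν

/-- Regular variation of index `-α` of the tail of `ν`. -/
def MemRV (ν : Measure ℝ) (α : ℝ) : Prop :=
  ∀ t : ℝ, 0 < t → Tendsto (fun x => mTail ν (t * x) / mTail ν x) atTop (𝓝 (t ^ (-α)))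

/-- Weak tail-equivalence `f ≍ g`. -/
def WeakTailEquiv (f g : ℝ → ℝ) : Prop :=
  ∃ c₁ c₂ : ℝ, 0 < c₁ ∧ ∀ᶠ x in atTop, c₁ * g x ≤ f x ∧ f x ≤ c₂ * g x

/-- (Standard) multivariate regular variation `F ∈ MRV(α, V, μ)` of the distribution of `X`. -/
structure IsMRV (P : Measure Ω) (X : Ω → Fin d → ℝ) (α : ℝ) (V : Measure ℝ)
    (μ : Measure (Fin d → ℝ)) : Prop where
  alpha_pos : 0 < α
  V_prob : IsProbabilityMeasure V
  V_rv : MemRV V α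
  mu_ne_zero : ∃ B : Set (Fin d → ℝ), (0 : Fin d → ℝ) ∉ closure B ∧ 0 < μ B
  mu_radon : ∀ B : Set (Fin d → ℝ), (0 : Fin d → ℝ) ∉ closure B → μ B ≠ ⊤
  tendsto : ∀ B : Set (Fin d → ℝ), MeasurableSet B → (0 : Fin d → ℝ) ∉ closure B →
    μ (frontier B) = 0 →
    Tendsto (fun x => vTail P B X x / mTail V x) atTop (𝓝 ((μ B).toReal))

/-- Support of a distribution on `ℝ`. -/
def measSupport (ν : Measure ℝ) : Set ℝ := {t | ∀ U ∈ 𝓝 t, 0 < ν U}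

/-- Assumption `CD_A`: conditional dependence of `(X, Θ)` on `A` with transfer function `h`:
`P[Y_A > x | Θ = t] ~ h(t) P[Y_A > x]` uniformly on the support of the distribution of `Θ`. -/
def CDA (P : Measure Ω) [IsFiniteMeasure P] (A : Set (Fin d → ℝ))
    (X : Ω → Fin d → ℝ) (Θ : Ω → ℝ) (h : ℝ → ℝ) : Prop :=
  ∀ ε : ℝ, 0 < ε → ∀ᶠ x in atTop, ∀ t ∈ measSupport (P.map Θ),
    |((condDistrib (fun ω => suprA A (X ω)) Θ P) t (Set.Ioi x)).toReal /
        (h t * (P {ω | x < suprA A (X ω)}).toReal) - 1| ≤ ε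

/-- Assumption `B_A`: `P[Θ > c x] = o(P[Θ Y_A > x])` for all `c > 0`. -/
def BA (P : Measure Ω) (A : Set (Fin d → ℝ)) (X : Ω → Fin d → ℝ) (Θ : Ω → ℝ) : Prop :=
  ∀ c : ℝ, 0 < c →
    Tendsto (fun x => (P {ω | c * x < Θ ω}).toReal /
      (P {ω | x < Θ ω * suprA A (X ω)}).toReal) atTop (𝓝 0)

/-- Assumption `B_A` in the form `P[Θ > c x] = o(P[Θ X ∈ x A])` for all `c > 0`. -/
def BA' (P : Measure Ω) (A : Set (Fin d → ℝ)) (X : Ω → Fin d → ℝ) (Θ : Ω → ℝ) : Prop :=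
  ∀ c : ℝ, 0 < c →
    Tendsto (fun x => (P {ω | c * x < Θ ω}).toReal /
      (P {ω | Θ ω • X ω ∈ x • A}).toReal) atTop (𝓝 0)


section Aux
open Set

variable {A : Set (Fin d → ℝ)}

lemma IsRSet.zero_notMem (hA : IsRSet d A) : (0 : Fin d → ℝ) ∉ A :=
  fun h => hA.zero_notMem_closure (subset_closure h)

/-- there is `r > 0` such that every point of `A` has a coordinate `≥ r`. -/
lemma IsRSet.exists_r (hA : IsRSet d A) : ∃ r : ℝ, 0 < r ∧ ∀ a ∈ A, ∃ i, r ≤ a i := by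
  have h := hA.zero_notMem_closure
  rw [Metric.mem_closure_iff] at h
  push_neg at h
  obtain ⟨r, hr, hball⟩ := h
  refine ⟨r, hr, fun a ha => ?_⟩
  by_contra hcon
  push_neg at hcon
  set u : Fin d → ℝ := fun i => max (a i) 0 with hu
  have hmem : u ∈ A := by
    have := hA.increasing a ha (u - a) (fun i => by simp [hu, sub_nonneg])
    simpa using this
  have h1 : r ≤ dist (0 : Fin d → ℝ) u := hball u hmem
  rw [dist_zero_left] at h1
  have h2 : ‖u‖ < r := by
    rcases eq_or_ne d 0 with hd | hd
    · subst hd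
      have : u = 0 := funext fun i => absurd i.2 (by omega)
      rw [this, norm_zero]; exact hr
    · have : Nonempty (Fin d) := ⟨⟨0, Nat.pos_of_ne_zero hd⟩⟩
      rw [pi_norm_lt_iff hr]
      intro i
      have : 0 ≤ u i := le_max_right _ _
      rw [Real.norm_eq_abs, abs_of_nonneg this]
      exact max_lt (hcon i) hr
  linarith

lemma IsRSet.smul_mem (hA : IsRSet d A) {a : Fin d → ℝ} (ha : a ∈ A) {l : ℝ} (hl : 1 ≤ l) :
    l • a ∈ A := by
  by_contra h
  have h0 : (0 : Fin d → ℝ) ∈ Aᶜ := hA.zero_notMem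
  have hlpos : (0:ℝ) < l := lt_of_lt_of_le one_pos hl
  have := hA.convex_compl h h0 (a := l⁻¹) (b := 1 - l⁻¹)
    (by positivity) (by simp; exact inv_le_one_of_one_le₀ hl) (by ring)
  rw [smul_smul, inv_mul_cancel₀ hlpos.ne', one_smul, smul_zero, add_zero] at this
  exact this ha

lemma suprA_nonneg (A : Set (Fin d → ℝ)) (z : Fin d → ℝ) : 0 ≤ suprA A z :=
  Real.sSup_nonneg (fun u hu => hu.1.le)

section r

variable (hA : IsRSet d A) {r : ℝ} (hr : 0 < r) (hrA : ∀ a ∈ A, ∃ i, r ≤ a i)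
include hA hr hrA

lemma le_of_mem_S {z : Fin d → ℝ} {u : ℝ} (hu : 0 < u ∧ z ∈ u • A) : u ≤ ‖z‖ / r := by
  obtain ⟨hu0, hmem⟩ := hu
  rw [mem_smul_set_iff_inv_smul_mem₀ hu0.ne'] at hmem
  obtain ⟨i, hi⟩ := hrA _ hmem
  have : (u⁻¹ • z) i ≤ ‖u⁻¹ • z‖ := by
    calc (u⁻¹ • z) i ≤ |(u⁻¹ • z) i| := le_abs_self _
    _ ≤ ‖u⁻¹ • z‖ := by rw [← Real.norm_eq_abs]; exact norm_le_pi_norm _ i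
  have h2 : r ≤ ‖u⁻¹ • z‖ := le_trans hi this
  rw [norm_smul, Real.norm_eq_abs, abs_of_pos (inv_pos.2 hu0)] at h2
  rw [le_div_iff₀ hr]
  calc u * r ≤ u * (u⁻¹ * ‖z‖) := by nlinarith
  _ = ‖z‖ := by field_simp

lemma bddAbove_S (z : Fin d → ℝ) : BddAbove {u : ℝ | 0 < u ∧ z ∈ u • A} :=
  ⟨‖z‖ / r, fun u hu => le_of_mem_S hA hr hrA hu⟩

lemma suprA_le_norm (z : Fin d → ℝ) : suprA A z ≤ ‖z‖ / r :=
  Real.sSup_le (fun u hu => le_of_mem_S hA hr hrA hu) (by positivity)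

lemma mem_smul_iff_lt_suprA {z : Fin d → ℝ} {x : ℝ} (hx : 0 < x) :
    z ∈ x • A ↔ x < suprA A z := by
  constructor
  · intro hmem
    have ha : x⁻¹ • z ∈ A := (mem_smul_set_iff_inv_smul_mem₀ hx.ne' A z).1 hmem
    have hc : ContinuousAt (fun t : ℝ => t⁻¹ • z) x :=
      ((continuousAt_inv₀ hx.ne').smul continuousAt_const)
    have hev : ∀ᶠ t in 𝓝 x, t⁻¹ • z ∈ A := hc.eventually_mem (hA.isOpen.mem_nhds ha)
    have hev' : ∀ᶠ t in 𝓝[>] x, t⁻¹ • z ∈ A := hev.filter_mono nhdsWithin_le_nhds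
    obtain ⟨t, htA, htx⟩ := (hev'.and self_mem_nhdsWithin).exists
    have htpos : 0 < t := lt_trans hx htx
    have htS : t ∈ {u : ℝ | 0 < u ∧ z ∈ u • A} :=
      ⟨htpos, (mem_smul_set_iff_inv_smul_mem₀ htpos.ne' A z).2 htA⟩
    exact lt_of_lt_of_le htx (le_csSup (bddAbove_S hA hr hrA z) htS)
  · intro hlt
    have hne : {u : ℝ | 0 < u ∧ z ∈ u • A}.Nonempty := by
      by_contra hcon
      rw [not_nonempty_iff_eq_empty] at hcon
      rw [suprA, hcon, Real.sSup_empty] at hlt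
      linarith
    obtain ⟨u, huS, hxu⟩ := exists_lt_of_lt_csSup hne hlt
    obtain ⟨hu0, hmem⟩ := huS
    rw [mem_smul_set_iff_inv_smul_mem₀ hu0.ne'] at hmem
    have : (u / x) • (u⁻¹ • z) ∈ A :=
      hA.smul_mem hmem ((one_le_div hx).2 hxu.le)
    rw [smul_smul] at this
    have heq : u / x * u⁻¹ = x⁻¹ := by field_simp
    rw [heq] at this
    exact (mem_smul_set_iff_inv_smul_mem₀ hx.ne' A z).2 this

lemma measurable_suprA : Measurable (suprA A) := by
  apply measurable_of_Ioi
  intro x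
  rcases lt_trichotomy x 0 with hx | hx | hx
  · have : suprA A ⁻¹' Ioi x = univ := by
      ext z; simp only [mem_preimage, mem_Ioi, mem_univ, iff_true]
      exact lt_of_lt_of_le hx (suprA_nonneg A z)
    rw [this]; exact MeasurableSet.univ
  · subst hx
    have : suprA A ⁻¹' Ioi 0 = ⋃ n : ℕ, ((1 / (n + 1) : ℝ) • A) := by
      ext z
      simp only [mem_preimage, mem_Ioi, mem_iUnion]
      constructor
      · intro h
        obtain ⟨n, hn⟩ := exists_nat_one_div_lt h
        have hpos : (0:ℝ) < 1 / (n + 1) := by positivity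
        exact ⟨n, (mem_smul_iff_lt_suprA hA hr hrA hpos).2 hn⟩
      · rintro ⟨n, hn⟩
        have hpos : (0:ℝ) < 1 / (n + 1) := by positivity
        exact lt_trans hpos ((mem_smul_iff_lt_suprA hA hr hrA hpos).1 hn)
    rw [this]
    exact MeasurableSet.iUnion fun n => ((hA.isOpen.smul₀ (by positivity)).measurableSet)
  · have : suprA A ⁻¹' Ioi x = x • A := by
      ext z
      simp only [mem_preimage, mem_Ioi]
      exact (mem_smul_iff_lt_suprA hA hr hrA hx).symm
    rw [this]
    exact (hA.isOpen.smul₀ hx.ne').measurableSet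

lemma suprA_add_le (v w : Fin d → ℝ) :
    suprA A (v + w) ≤ suprA A v + suprA A w := by
  apply Real.sSup_le _ (by have := suprA_nonneg A v; have := suprA_nonneg A w; linarith)
  rintro u ⟨hu0, hmem⟩
  by_contra hcon
  push_neg at hcon
  set sv := suprA A v
  set sw := suprA A w
  set p := sv + (u - (sv + sw)) / 2 with hp
  set q := sw + (u - (sv + sw)) / 2 with hq
  have hsv : 0 ≤ sv := suprA_nonneg A v
  have hsw : 0 ≤ sw := suprA_nonneg A w
  have hppos : 0 < p := by simp only [hp]; linarith
  have hqpos : 0 < q := by simp only [hq]; linarith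
  have hpq : p + q = u := by simp only [hp, hq]; ring
  have hvp : p⁻¹ • v ∉ A := by
    intro hmem'
    have : p ∈ {u : ℝ | 0 < u ∧ v ∈ u • A} :=
      ⟨hppos, (mem_smul_set_iff_inv_smul_mem₀ hppos.ne' A v).2 hmem'⟩
    have := le_csSup (bddAbove_S hA hr hrA v) this
    simp only [hp] at this; change p ≤ sv at this; simp only [hp] at this; linarith
  have hwq : q⁻¹ • w ∉ A := by
    intro hmem'
    have : q ∈ {u : ℝ | 0 < u ∧ w ∈ u • A} :=
      ⟨hqpos, (mem_smul_set_iff_inv_smul_mem₀ hqpos.ne' A w).2 hmem'⟩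
    have := le_csSup (bddAbove_S hA hr hrA w) this
    change q ≤ sw at this; simp only [hq] at this; linarith
  have hconv := hA.convex_compl hvp hwq (a := p / u) (b := q / u)
    (by positivity) (by positivity) (by field_simp; linarith)
  have heq : (p / u) • (p⁻¹ • v) + (q / u) • (q⁻¹ • w) = u⁻¹ • (v + w) := by
    rw [smul_smul, smul_smul, smul_add]
    congr 1 <;> congr 1 <;> field_simp <;> ring
  rw [heq] at hconv
  exact hconv ((mem_smul_set_iff_inv_smul_mem₀ hu0.ne' A _).1 hmem)

lemma suprA_le_of_nonneg {w : Fin d → ℝ} (hw : ∀ i, 0 ≤ w i) (v : Fin d → ℝ) :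
    suprA A v ≤ suprA A (v + w) := by
  rcases eq_empty_or_nonempty {u : ℝ | 0 < u ∧ v ∈ u • A} with he | hne
  · rw [suprA, he, Real.sSup_empty]; exact suprA_nonneg A _
  · apply csSup_le_csSup (bddAbove_S hA hr hrA _) hne
    rintro u ⟨hu0, hmem⟩
    refine ⟨hu0, ?_⟩
    rw [mem_smul_set_iff_inv_smul_mem₀ hu0.ne'] at hmem ⊢
    have := hA.increasing _ hmem (u⁻¹ • w) (fun i => by
      have := hw i; simp only [Pi.smul_apply, smul_eq_mul]; positivity)
    rw [← smul_add] at this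
    exact this

lemma suprA_sub_le (v w : Fin d → ℝ) :
    suprA A v - ‖w‖ / r ≤ suprA A (v + w) := by
  have h1 : suprA A v ≤ suprA A (v + w) + suprA A (-w) := by
    have := suprA_add_le hA hr hrA (v + w) (-w)
    simpa using this
  have h2 : suprA A (-w) ≤ ‖w‖ / r := by
    have := suprA_le_norm hA hr hrA (-w)
    rwa [norm_neg] at this
  linarith

end r


lemma mTail_nonneg (ν : Measure ℝ) (x : ℝ) : 0 ≤ mTail ν x := ENNReal.toReal_nonneg

lemma mTail_anti (ν : Measure ℝ) [IsFiniteMeasure ν] {x y : ℝ} (h : x ≤ y) :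
    mTail ν y ≤ mTail ν x :=
  ENNReal.toReal_mono (measure_ne_top ν _) (measure_mono (Ioi_subset_Ioi h))

lemma tendsto_mTail_atTop (ν : Measure ℝ) [IsFiniteMeasure ν] :
    Tendsto (fun x => mTail ν x) atTop (𝓝 0) := by
  have h : Tendsto (fun x : ℝ => ν (Ioi x)) atTop (𝓝 (ν (⋂ x : ℝ, Ioi x))) :=
    tendsto_measure_iInter_atTop (fun x => measurableSet_Ioi.nullMeasurableSet)
      (fun a b hab => Ioi_subset_Ioi hab) ⟨0, measure_ne_top ν _⟩
  have hempty : (⋂ x : ℝ, Ioi x) = (∅ : Set ℝ) := by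
    ext y
    simp only [mem_iInter, mem_Ioi, mem_empty_iff_false, iff_false]
    push_neg
    exact ⟨y, le_rfl⟩
  rw [hempty, measure_empty] at h
  have := (ENNReal.tendsto_toReal (by simp)).comp h
  simpa [mTail, Function.comp_def] using this

/-- `|f/g - 1| = |f - g| / g` for `g > 0`. -/
lemma abs_div_sub_one {f g : ℝ} (hg : 0 < g) : |f / g - 1| = |f - g| / g := by
  rw [div_sub_one hg.ne', abs_div, abs_of_pos hg]

lemma tendsto_sum_div_sum {f₁ f₂ g₁ g₂ : ℝ → ℝ}
    (h₁ : Tendsto (fun x => f₁ x / g₁ x) atTop (𝓝 1))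
    (h₂ : Tendsto (fun x => f₂ x / g₂ x) atTop (𝓝 1))
    (hg₁ : ∀ᶠ x in atTop, 0 < g₁ x) (hg₂ : ∀ᶠ x in atTop, 0 < g₂ x) :
    Tendsto (fun x => (f₁ x + f₂ x) / (g₁ x + g₂ x)) atTop (𝓝 1) := by
  rw [Metric.tendsto_atTop]
  intro ε hε
  have e₁ : ∀ᶠ x in atTop, dist (f₁ x / g₁ x) 1 < ε / 2 :=
    eventually_atTop.2 ((Metric.tendsto_atTop.1 h₁) (ε / 2) (by positivity))
  have e₂ : ∀ᶠ x in atTop, dist (f₂ x / g₂ x) 1 < ε / 2 :=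
    eventually_atTop.2 ((Metric.tendsto_atTop.1 h₂) (ε / 2) (by positivity))
  have := ((e₁.and e₂).and (hg₁.and hg₂))
  rw [eventually_atTop] at this
  obtain ⟨N, hN⟩ := this
  refine ⟨N, fun x hx => ?_⟩
  obtain ⟨⟨hd₁, hd₂⟩, hp₁, hp₂⟩ := hN x hx
  rw [Real.dist_eq] at hd₁ hd₂ ⊢
  rw [abs_div_sub_one hp₁] at hd₁
  rw [abs_div_sub_one hp₂] at hd₂
  have hb₁ : |f₁ x - g₁ x| ≤ ε / 2 * g₁ x := by
    rw [div_lt_iff₀ hp₁] at hd₁; linarith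
  have hb₂ : |f₂ x - g₂ x| ≤ ε / 2 * g₂ x := by
    rw [div_lt_iff₀ hp₂] at hd₂; linarith
  have hgs : 0 < g₁ x + g₂ x := by linarith
  rw [abs_div_sub_one hgs, div_lt_iff₀ hgs]
  calc |f₁ x + f₂ x - (g₁ x + g₂ x)| = |(f₁ x - g₁ x) + (f₂ x - g₂ x)| := by ring_nf
  _ ≤ |f₁ x - g₁ x| + |f₂ x - g₂ x| := abs_add_le _ _
  _ ≤ ε / 2 * (g₁ x + g₂ x) := by linarith
  _ < ε * (g₁ x + g₂ x) := by nlinarith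

lemma mConv_apply_Ioi (μ₁ μ₂ : Measure ℝ) [SFinite μ₁] [SFinite μ₂] (x : ℝ) :
    mConv μ₁ μ₂ (Ioi x) = (μ₁.prod μ₂) {p : ℝ × ℝ | x < p.1 + p.2} := by
  rw [mConv, Measure.map_apply (show Measurable fun p : ℝ × ℝ => p.1 + p.2 from measurable_fst.add measurable_snd) measurableSet_Ioi]
  rfl

lemma conv_tail_upper (μ₁ μ₂ : Measure ℝ) [IsProbabilityMeasure μ₁] [IsProbabilityMeasure μ₂]
    {x : ℝ} (M : ℝ) (hx : 0 < x) :
    mTail (mConv μ₁ μ₂) x ≤ mTail μ₁ (x - M) + mTail μ₂ (x - M)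
      + mTail μ₁ ((1/4) * x) * mTail μ₂ M + mTail μ₁ M * mTail μ₂ ((1/4) * x) := by
  have hsub : {p : ℝ × ℝ | x < p.1 + p.2} ⊆
      (Ioi (x - M) ×ˢ univ) ∪ (univ ×ˢ Ioi (x - M)) ∪ (Ioi ((1/4) * x) ×ˢ Ioi M)
        ∪ (Ioi M ×ˢ Ioi ((1/4) * x)) := by
    rintro ⟨p, q⟩ h
    simp only [mem_setOf_eq] at h
    simp only [mem_union, mem_prod, mem_Ioi, mem_univ, and_true, true_and]
    rcases lt_or_ge (x - M) p with h1 | h1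
    · exact Or.inl (Or.inl (Or.inl h1))
    rcases lt_or_ge (x - M) q with h2 | h2
    · exact Or.inl (Or.inl (Or.inr h2))
    have hpM : M < p := by linarith
    have hqM : M < q := by linarith
    rcases le_or_gt p q with h3 | h3
    · exact Or.inr ⟨hpM, by linarith⟩
    · exact Or.inl (Or.inr ⟨by linarith, hqM⟩)
  have hEN : mConv μ₁ μ₂ (Ioi x) ≤ μ₁ (Ioi (x - M)) + μ₂ (Ioi (x - M))
      + μ₁ (Ioi ((1/4) * x)) * μ₂ (Ioi M) + μ₁ (Ioi M) * μ₂ (Ioi ((1/4) * x)) := by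
    rw [mConv_apply_Ioi]
    refine le_trans (measure_mono hsub) ?_
    calc (μ₁.prod μ₂) ((Ioi (x - M) ×ˢ univ ∪ univ ×ˢ Ioi (x - M) ∪ Ioi ((1/4) * x) ×ˢ Ioi M)
          ∪ Ioi M ×ˢ Ioi ((1/4) * x))
        ≤ (μ₁.prod μ₂) (Ioi (x - M) ×ˢ univ ∪ univ ×ˢ Ioi (x - M) ∪ Ioi ((1/4) * x) ×ˢ Ioi M)
          + (μ₁.prod μ₂) (Ioi M ×ˢ Ioi ((1/4) * x)) := measure_union_le _ _
      _ ≤ ((μ₁.prod μ₂) (Ioi (x - M) ×ˢ univ ∪ univ ×ˢ Ioi (x - M))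
          + (μ₁.prod μ₂) (Ioi ((1/4) * x) ×ˢ Ioi M))
          + (μ₁.prod μ₂) (Ioi M ×ˢ Ioi ((1/4) * x)) :=
          add_le_add (measure_union_le _ _) le_rfl
      _ ≤ (((μ₁.prod μ₂) (Ioi (x - M) ×ˢ univ) + (μ₁.prod μ₂) (univ ×ˢ Ioi (x - M)))
          + (μ₁.prod μ₂) (Ioi ((1/4) * x) ×ˢ Ioi M))
          + (μ₁.prod μ₂) (Ioi M ×ˢ Ioi ((1/4) * x)) :=
          add_le_add (add_le_add (measure_union_le _ _) le_rfl) le_rfl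
      _ = μ₁ (Ioi (x - M)) + μ₂ (Ioi (x - M)) + μ₁ (Ioi ((1/4) * x)) * μ₂ (Ioi M)
          + μ₁ (Ioi M) * μ₂ (Ioi ((1/4) * x)) := by
          simp [Measure.prod_prod]
  have hne : μ₁ (Ioi (x - M)) + μ₂ (Ioi (x - M))
      + μ₁ (Ioi ((1/4) * x)) * μ₂ (Ioi M) + μ₁ (Ioi M) * μ₂ (Ioi ((1/4) * x)) ≠ ⊤ := by
    finiteness
  have := ENNReal.toReal_mono hne hEN
  rw [ENNReal.toReal_add (by finiteness) (by finiteness),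
    ENNReal.toReal_add (by finiteness) (by finiteness),
    ENNReal.toReal_add (by finiteness) (by finiteness),
    ENNReal.toReal_mul, ENNReal.toReal_mul] at this
  exact this

lemma conv_tail_lower (μ₁ μ₂ : Measure ℝ) [IsProbabilityMeasure μ₁] [IsProbabilityMeasure μ₂]
    (h₁0 : μ₁ (Iio 0) = 0) (h₂0 : μ₂ (Iio 0) = 0) (x : ℝ) :
    mTail μ₁ x + mTail μ₂ x - mTail μ₁ x * mTail μ₂ x ≤ mTail (mConv μ₁ μ₂) x := by
  have hIci1 : μ₁ (Ici (0:ℝ)) = 1 := by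
    rw [← compl_Iio, measure_compl measurableSet_Iio (measure_ne_top μ₁ _), h₁0]
    simp
  have hIci2 : μ₂ (Ici (0:ℝ)) = 1 := by
    rw [← compl_Iio, measure_compl measurableSet_Iio (measure_ne_top μ₂ _), h₂0]
    simp
  set E₁ : Set (ℝ × ℝ) := Ioi x ×ˢ Ici 0
  set E₂ : Set (ℝ × ℝ) := Ici 0 ×ˢ Ioi x
  have hsub : E₁ ∪ E₂ ⊆ {p : ℝ × ℝ | x < p.1 + p.2} := by
    rintro ⟨p, q⟩ h
    rcases h with h | h
    · obtain ⟨h1, h2⟩ := h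
      simp only [mem_Ioi] at h1; simp only [mem_Ici] at h2
      simp only [mem_setOf_eq]; linarith
    · obtain ⟨h1, h2⟩ := h
      simp only [mem_Ici] at h1; simp only [mem_Ioi] at h2
      simp only [mem_setOf_eq]; linarith
  have hinter : E₁ ∩ E₂ ⊆ Ioi x ×ˢ Ioi x := by
    rintro ⟨p, q⟩ ⟨⟨h1, _⟩, ⟨_, h4⟩⟩
    exact ⟨h1, h4⟩
  have hkey : (μ₁.prod μ₂) (E₁ ∪ E₂) + (μ₁.prod μ₂) (E₁ ∩ E₂)
      = (μ₁.prod μ₂) E₁ + (μ₁.prod μ₂) E₂ :=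
    measure_union_add_inter E₁ (measurableSet_Ici.prod measurableSet_Ioi)
  have hkeyR : ((μ₁.prod μ₂) (E₁ ∪ E₂)).toReal + ((μ₁.prod μ₂) (E₁ ∩ E₂)).toReal
      = ((μ₁.prod μ₂) E₁).toReal + ((μ₁.prod μ₂) E₂).toReal := by
    rw [← ENNReal.toReal_add (by finiteness) (by finiteness),
      ← ENNReal.toReal_add (by finiteness) (by finiteness), hkey]
  have hE₁ : ((μ₁.prod μ₂) E₁).toReal = mTail μ₁ x := by
    rw [Measure.prod_prod, hIci2, mul_one]; rfl
  have hE₂ : ((μ₁.prod μ₂) E₂).toReal = mTail μ₂ x := by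
    rw [Measure.prod_prod, hIci1, one_mul]; rfl
  have hinterR : ((μ₁.prod μ₂) (E₁ ∩ E₂)).toReal ≤ mTail μ₁ x * mTail μ₂ x := by
    have := measure_mono (μ := μ₁.prod μ₂) hinter
    rw [Measure.prod_prod] at this
    have := ENNReal.toReal_mono (by finiteness) this
    rwa [ENNReal.toReal_mul] at this
  have hunion : ((μ₁.prod μ₂) (E₁ ∪ E₂)).toReal ≤ mTail (mConv μ₁ μ₂) x := by
    rw [mTail, mConv_apply_Ioi]
    exact ENNReal.toReal_mono (measure_ne_top _ _) (measure_mono hsub)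
  linarith [hE₁ ▸ hE₂ ▸ hkeyR]


lemma memD_mul {ν : Measure ℝ} (hD : MemD ν) {y : ℝ} (hy0 : 0 < y) (hy1 : y < 1)
    (hpos : ∀ᶠ x in atTop, 0 < mTail ν x) :
    ∃ C : ℝ, 1 ≤ C ∧ ∀ᶠ x in atTop, mTail ν (y * x) ≤ C * mTail ν x := by
  obtain ⟨C, hC⟩ := hD y hy0 hy1
  refine ⟨max C 1, le_max_right _ _, ?_⟩
  filter_upwards [hC, hpos] with x h1 h2
  exact (div_le_iff₀ h2).1 (le_trans h1 (le_max_left C 1))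

lemma memL_shift {ν : Measure ℝ} (hL : MemL ν) {K : ℝ} (hK : 0 < K) :
    Tendsto (fun x => mTail ν (x + K) / mTail ν x) atTop (𝓝 1) := by
  have h := hL K hK
  have h2 : Tendsto (fun x => mTail ν x / mTail ν (x + K)) atTop (𝓝 1) := by
    have h' := h.comp (tendsto_atTop_add_const_right atTop K tendsto_id)
    have heq : ((fun x => mTail ν (x - K) / mTail ν x) ∘ fun x => x + K)
        = fun x => mTail ν x / mTail ν (x + K) := by
      funext x; simp [Function.comp, add_sub_cancel_right]
    simp only [id] at h'
    rwa [heq] at h'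
  have h3 := h2.inv₀ one_ne_zero
  simp only [inv_div, inv_one] at h3
  exact h3

lemma conv_tail_equiv (μ₁ μ₂ : Measure ℝ) [IsProbabilityMeasure μ₁] [IsProbabilityMeasure μ₂]
    (h₁0 : μ₁ (Iio 0) = 0) (h₂0 : μ₂ (Iio 0) = 0)
    (h₁D : MemD μ₁) (h₂D : MemD μ₂) (h₁L : MemL μ₁) (h₂L : MemL μ₂)
    (h₁pos : ∀ᶠ x in atTop, 0 < mTail μ₁ x) (h₂pos : ∀ᶠ x in atTop, 0 < mTail μ₂ x) :
    Tendsto (fun x => mTail (mConv μ₁ μ₂) x / (mTail μ₁ x + mTail μ₂ x)) atTop (𝓝 1) := by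
  have hTpos : ∀ᶠ x in atTop, 0 < mTail μ₁ x + mTail μ₂ x := by
    filter_upwards [h₁pos, h₂pos] with x h1 h2; linarith
  rw [tendsto_order]
  constructor
  · intro c hc
    have hsmall : ∀ᶠ x in atTop, mTail μ₂ x < 1 - c :=
      (tendsto_mTail_atTop μ₂).eventually_lt_const (by linarith)
    filter_upwards [hTpos, hsmall] with x hT h2s
    have hlow := conv_tail_lower μ₁ μ₂ h₁0 h₂0 x
    have hstep : (1 - mTail μ₂ x) * (mTail μ₁ x + mTail μ₂ x) ≤ mTail (mConv μ₁ μ₂) x := by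
      nlinarith [mTail_nonneg μ₁ x, mTail_nonneg μ₂ x]
    have := (le_div_iff₀ hT).2 hstep
    calc c < 1 - mTail μ₂ x := by linarith
    _ ≤ _ := this
  · intro c hc
    set ε := (c - 1) / 3 with hεdef
    have hεpos : 0 < ε := by rw [hεdef]; linarith
    obtain ⟨C₁, hC₁ge, hC₁⟩ := memD_mul h₁D (by norm_num : (0:ℝ) < 1/4) (by norm_num) h₁pos
    obtain ⟨C₂, hC₂ge, hC₂⟩ := memD_mul h₂D (by norm_num : (0:ℝ) < 1/4) (by norm_num) h₂pos
    set C := max C₁ C₂ with hCdef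
    have hC1le : C₁ ≤ C := le_max_left _ _
    have hC2le : C₂ ≤ C := le_max_right _ _
    have hCpos : (0:ℝ) < C := lt_of_lt_of_le one_pos (le_trans hC₁ge hC1le)
    have hMev : ∀ᶠ M in atTop, mTail μ₁ M + mTail μ₂ M < ε / C := by
      have := (tendsto_mTail_atTop μ₁).add (tendsto_mTail_atTop μ₂)
      rw [add_zero] at this
      exact this.eventually_lt_const (by positivity)
    obtain ⟨M, hMsmall, hMpos⟩ := (hMev.and (eventually_gt_atTop (0:ℝ))).exists
    have hL₁ : ∀ᶠ x in atTop, mTail μ₁ (x - M) ≤ (1 + ε) * mTail μ₁ x := by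
      filter_upwards [(h₁L M hMpos).eventually_lt_const (by linarith : (1:ℝ) < 1 + ε), h₁pos]
        with x h1 h2
      exact le_of_lt ((div_lt_iff₀ h2).1 h1)
    have hL₂ : ∀ᶠ x in atTop, mTail μ₂ (x - M) ≤ (1 + ε) * mTail μ₂ x := by
      filter_upwards [(h₂L M hMpos).eventually_lt_const (by linarith : (1:ℝ) < 1 + ε), h₂pos]
        with x h1 h2
      exact le_of_lt ((div_lt_iff₀ h2).1 h1)
    filter_upwards [hL₁, hL₂, hC₁, hC₂, hTpos, h₁pos, h₂pos, eventually_gt_atTop (0:ℝ)]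
      with x e₁ e₂ e₃ e₄ hT ht₁ ht₂ hx
    have hub := conv_tail_upper μ₁ μ₂ M hx
    have hq₁ : mTail μ₁ ((1/4) * x) * mTail μ₂ M ≤ C * mTail μ₂ M * mTail μ₁ x := by
      have h2M : 0 ≤ mTail μ₂ M := mTail_nonneg _ _
      calc mTail μ₁ ((1/4) * x) * mTail μ₂ M ≤ (C₁ * mTail μ₁ x) * mTail μ₂ M :=
            mul_le_mul_of_nonneg_right e₃ h2M
      _ = C₁ * (mTail μ₁ x * mTail μ₂ M) := by ring
      _ ≤ C * (mTail μ₁ x * mTail μ₂ M) := by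
            apply mul_le_mul_of_nonneg_right hC1le
            positivity
      _ = C * mTail μ₂ M * mTail μ₁ x := by ring
    have hq₂ : mTail μ₁ M * mTail μ₂ ((1/4) * x) ≤ C * mTail μ₁ M * mTail μ₂ x := by
      have h1M : 0 ≤ mTail μ₁ M := mTail_nonneg _ _
      calc mTail μ₁ M * mTail μ₂ ((1/4) * x) ≤ mTail μ₁ M * (C₂ * mTail μ₂ x) :=
            mul_le_mul_of_nonneg_left e₄ h1M
      _ = C₂ * (mTail μ₁ M * mTail μ₂ x) := by ring
      _ ≤ C * (mTail μ₁ M * mTail μ₂ x) := by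
            apply mul_le_mul_of_nonneg_right hC2le
            positivity
      _ = C * mTail μ₁ M * mTail μ₂ x := by ring
    have hMC : C * (mTail μ₁ M + mTail μ₂ M) ≤ ε := by
      have := mul_le_mul_of_nonneg_left hMsmall.le hCpos.le
      rwa [mul_div_cancel₀ _ hCpos.ne'] at this
    have hfinal : mTail (mConv μ₁ μ₂) x ≤ (1 + 2*ε) * (mTail μ₁ x + mTail μ₂ x) := by
      have h1M : 0 ≤ mTail μ₁ M := mTail_nonneg _ _
      have h2M : 0 ≤ mTail μ₂ M := mTail_nonneg _ _
      have hb₁ : C * mTail μ₂ M * mTail μ₁ x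
          ≤ C * mTail μ₂ M * (mTail μ₁ x + mTail μ₂ x) := by
        apply mul_le_mul_of_nonneg_left (by linarith : mTail μ₁ x ≤ mTail μ₁ x + mTail μ₂ x)
        positivity
      have hb₂ : C * mTail μ₁ M * mTail μ₂ x
          ≤ C * mTail μ₁ M * (mTail μ₁ x + mTail μ₂ x) := by
        apply mul_le_mul_of_nonneg_left (by linarith : mTail μ₂ x ≤ mTail μ₁ x + mTail μ₂ x)
        positivity
      have hsum : C * mTail μ₂ M * (mTail μ₁ x + mTail μ₂ x)
            + C * mTail μ₁ M * (mTail μ₁ x + mTail μ₂ x)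
          ≤ ε * (mTail μ₁ x + mTail μ₂ x) := by
        have h' := mul_le_mul_of_nonneg_right hMC hT.le
        calc C * mTail μ₂ M * (mTail μ₁ x + mTail μ₂ x)
              + C * mTail μ₁ M * (mTail μ₁ x + mTail μ₂ x)
            = C * (mTail μ₁ M + mTail μ₂ M) * (mTail μ₁ x + mTail μ₂ x) := by ring
        _ ≤ ε * (mTail μ₁ x + mTail μ₂ x) := h'
      linarith
    have hlt : mTail (mConv μ₁ μ₂) x < c * (mTail μ₁ x + mTail μ₂ x) := by
      refine lt_of_le_of_lt hfinal ?_
      apply mul_lt_mul_of_pos_right _ hT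
      rw [hεdef]; linarith
    exact (div_lt_iff₀ hT).2 hlt




lemma prob_Iic_toReal {μ : Measure ℝ} [IsProbabilityMeasure μ] (a : ℝ) :
    (μ (Iic a)).toReal = 1 - mTail μ a := by
  rw [← compl_Ioi, measure_compl measurableSet_Ioi (measure_ne_top μ _), measure_univ,
    ENNReal.toReal_sub_of_le prob_le_one ENNReal.one_ne_top, ENNReal.toReal_one]
  rfl

lemma Ioc_toReal {μ : Measure ℝ} [IsProbabilityMeasure μ] {a x : ℝ} (hax : a ≤ x) :
    (μ (Ioc a x)).toReal = mTail μ a - mTail μ x := by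
  rw [← Ioi_diff_Ioi, measure_diff (Ioi_subset_Ioi hax) measurableSet_Ioi.nullMeasurableSet
    (measure_ne_top μ _), ENNReal.toReal_sub_of_le (measure_mono (Ioi_subset_Ioi hax))
    (measure_ne_top μ _)]
  rfl

lemma memL_of_memS (μ : Measure ℝ) [IsProbabilityMeasure μ] (h0 : μ (Iio 0) = 0)
    (hpos : ∀ x : ℝ, 0 < mTail μ x) (hS : MemS μ) : MemL μ := by
  intro a ha
  have hta : 0 < mTail μ a := hpos a
  have hIci : μ (Ici (0:ℝ)) = 1 := by
    rw [← compl_Iio, measure_compl measurableSet_Iio (measure_ne_top μ _), h0]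
    simp
  have hIcc : (μ (Icc 0 a)).toReal = 1 - mTail μ a := by
    have h1 : μ (Icc 0 a) ≤ μ (Iic a) := measure_mono Icc_subset_Iic_self
    have h2 : μ (Iic a) ≤ μ (Icc 0 a) := by
      have hsub : Iic a ⊆ Icc 0 a ∪ Iio 0 := by
        intro y hy
        rcases lt_or_ge y 0 with h | h
        · exact Or.inr h
        · exact Or.inl ⟨h, hy⟩
      calc μ (Iic a) ≤ μ (Icc 0 a ∪ Iio 0) := measure_mono hsub
        _ ≤ μ (Icc 0 a) + μ (Iio 0) := measure_union_le _ _
        _ = μ (Icc 0 a) := by rw [h0, add_zero]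
    rw [le_antisymm h1 h2, prob_Iic_toReal]
  -- key lower bound on the convolution tail
  have hkey : ∀ x : ℝ, a < x →
      mTail μ x + (mTail μ a - mTail μ x) * mTail μ (x - a) + (1 - mTail μ a) * mTail μ x
        ≤ mTail (mConv μ μ) x := by
    intro x hax
    set E₁ : Set (ℝ × ℝ) := Ioi x ×ˢ Ici 0
    set E₂ : Set (ℝ × ℝ) := Ioc a x ×ˢ Ioi (x - a)
    set E₃ : Set (ℝ × ℝ) := Icc 0 a ×ˢ Ioi x
    have hsub : E₁ ∪ E₂ ∪ E₃ ⊆ {p : ℝ × ℝ | x < p.1 + p.2} := by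
      rintro ⟨p, q⟩ h
      simp only [E₁, E₂, E₃, mem_union, mem_prod, mem_Ioi, mem_Ioc, mem_Ici, mem_Icc] at h
      simp only [mem_setOf_eq]
      rcases h with (⟨h1, h2⟩ | ⟨⟨h1, _⟩, h2⟩) | ⟨⟨h1, _⟩, h2⟩ <;> linarith
    have hd₁₂ : Disjoint E₁ E₂ := by
      rw [Set.disjoint_left]
      rintro ⟨p, q⟩ h1 h2
      simp only [E₁, E₂, mem_prod, mem_Ioi, mem_Ioc, mem_Ici] at h1 h2
      linarith [h1.1, h2.1.2]
    have hd₃ : Disjoint (E₁ ∪ E₂) E₃ := by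
      rw [Set.disjoint_left]
      rintro ⟨p, q⟩ h1 h2
      simp only [E₁, E₂, E₃, mem_union, mem_prod, mem_Ioi, mem_Ioc, mem_Ici, mem_Icc] at h1 h2
      rcases h1 with ⟨h1, _⟩ | ⟨⟨h1, _⟩, _⟩ <;> linarith [h2.1.2]
    have hmeas₂ : MeasurableSet E₂ := (measurableSet_Ioc.prod measurableSet_Ioi)
    have hmeas₃ : MeasurableSet E₃ := (measurableSet_Icc.prod measurableSet_Ioi)
    have hunion : (μ.prod μ) (E₁ ∪ E₂ ∪ E₃)
        = (μ.prod μ) E₁ + (μ.prod μ) E₂ + (μ.prod μ) E₃ := by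
      rw [measure_union hd₃ hmeas₃, measure_union hd₁₂ hmeas₂]
    have hE₁ : ((μ.prod μ) E₁).toReal = mTail μ x := by
      simp only [E₁]; rw [Measure.prod_prod, hIci, mul_one]; rfl
    have hE₂ : ((μ.prod μ) E₂).toReal = (mTail μ a - mTail μ x) * mTail μ (x - a) := by
      simp only [E₂]; rw [Measure.prod_prod, ENNReal.toReal_mul, Ioc_toReal hax.le]; rfl
    have hE₃ : ((μ.prod μ) E₃).toReal = (1 - mTail μ a) * mTail μ x := by
      simp only [E₃]; rw [Measure.prod_prod, ENNReal.toReal_mul, hIcc]; rfl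
    calc mTail μ x + (mTail μ a - mTail μ x) * mTail μ (x - a) + (1 - mTail μ a) * mTail μ x
        = ((μ.prod μ) (E₁ ∪ E₂ ∪ E₃)).toReal := by
          rw [hunion, ENNReal.toReal_add (by finiteness) (by finiteness),
            ENNReal.toReal_add (by finiteness) (by finiteness), hE₁, hE₂, hE₃]
      _ ≤ mTail (mConv μ μ) x := by
          rw [mTail, mConv_apply_Ioi]
          exact ENNReal.toReal_mono (measure_ne_top _ _) (measure_mono hsub)
  -- the upper envelope
  set B : ℝ → ℝ := fun x =>
    (mTail (mConv μ μ) x / mTail μ x - 2 + mTail μ a) / (mTail μ a - mTail μ x) with hB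
  have hBtendsto : Tendsto B atTop (𝓝 1) := by
    have hnum : Tendsto (fun x => mTail (mConv μ μ) x / mTail μ x - 2 + mTail μ a) atTop
        (𝓝 (mTail μ a)) := by
      have := (hS.sub_const 2).add_const (mTail μ a)
      simpa using this
    have hden : Tendsto (fun x => mTail μ a - mTail μ x) atTop (𝓝 (mTail μ a)) := by
      have := (tendsto_const_nhds (x := mTail μ a) (f := atTop (α := ℝ))).sub
        (tendsto_mTail_atTop μ)
      simpa using this
    have := hnum.div hden hta.ne'
    rw [div_self hta.ne'] at this; exact this
  -- squeeze
  have hlower : ∀ᶠ x in atTop, (1:ℝ) ≤ mTail μ (x - a) / mTail μ x := by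
    filter_upwards [eventually_ge_atTop a] with x _
    rw [le_div_iff₀ (hpos x), one_mul]
    exact mTail_anti μ (by linarith)
  have hupper : ∀ᶠ x in atTop, mTail μ (x - a) / mTail μ x ≤ B x := by
    have hsm : ∀ᶠ x in atTop, mTail μ x < mTail μ a / 2 :=
      (tendsto_mTail_atTop μ).eventually_lt_const (by linarith)
    filter_upwards [eventually_gt_atTop a, hsm] with x hax hsmall
    have hd : 0 < mTail μ a - mTail μ x := by linarith
    have hk := hkey x hax
    rw [div_le_div_iff₀ (hpos x) hd]
    have hct : mTail (mConv μ μ) x / mTail μ x * mTail μ x = mTail (mConv μ μ) x :=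
      div_mul_cancel₀ _ (hpos x).ne'
    nlinarith [hk, hct]
  exact tendsto_of_tendsto_of_tendsto_of_le_of_le' tendsto_const_nhds hBtendsto hlower hupper


section Prob

variable {P : Measure Ω} [IsProbabilityMeasure P] {X : Ω → Fin d → ℝ}

lemma mTail_FA (hX : Measurable X) (hm : Measurable (suprA A)) (x : ℝ) :
    mTail (FA P A X) x = (P {ω | x < suprA A (X ω)}).toReal := by
  rw [mTail, FA, Measure.map_apply (show Measurable fun ω => suprA A (X ω) from hm.comp hX)
    measurableSet_Ioi]
  rfl

lemma FA_Iio_zero (hX : Measurable X) (hm : Measurable (suprA A)) :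
    FA P A X (Iio 0) = 0 := by
  rw [FA, Measure.map_apply (show Measurable fun ω => suprA A (X ω) from hm.comp hX)
    measurableSet_Iio]
  have : (fun ω => suprA A (X ω)) ⁻¹' Iio 0 = ∅ := by
    ext ω
    simp only [mem_preimage, mem_Iio, mem_empty_iff_false, iff_false, not_lt]
    exact suprA_nonneg A (X ω)
  rw [this, measure_empty]

lemma prob_toReal_compl {s : Set Ω} (hs : MeasurableSet s) :
    (P s).toReal = 1 - (P sᶜ).toReal := by
  rw [measure_compl hs (measure_ne_top P _), measure_univ,
    ENNReal.toReal_sub_of_le prob_le_one ENNReal.one_ne_top, ENNReal.toReal_one]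
  ring

end Prob

end Aux

set_option maxHeartbeats 3200000 in
/-- `(𝓓 ∩ 𝓐)_A` is closed under convolution, and the convolution of two
`(𝓓 ∩ 𝓐)_A` distributions satisfies `F₁*F₂(xA) ~ F₁(xA) + F₂(xA)`. -/
theorem statement4 (P : Measure Ω) [IsProbabilityMeasure P]
    (A : Set (Fin d → ℝ)) (hA : IsRSet d A)
    (X₁ X₂ : Ω → Fin d → ℝ) (hX₁ : Measurable X₁) (hX₂ : Measurable X₂)
    (hind : IndepFun X₁ X₂ P)
    (h₁D : MemD (FA P A X₁)) (h₁A : MemA (FA P A X₁))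
    (h₂D : MemD (FA P A X₂)) (h₂A : MemA (FA P A X₂))
    (hpos₁ : ∀ x : ℝ, 0 < x → 0 < P {ω | X₁ ω ∈ x • A})
    (hpos₂ : ∀ x : ℝ, 0 < x → 0 < P {ω | X₂ ω ∈ x • A}) :
    Tendsto (fun x => (P {ω | X₁ ω + X₂ ω ∈ x • A}).toReal /
        (vTail P A X₁ x + vTail P A X₂ x)) atTop (𝓝 1) ∧
      MemD (FA P A fun ω => X₁ ω + X₂ ω) ∧ MemA (FA P A fun ω => X₁ ω + X₂ ω) := by
  classical
  rcases Set.eq_empty_or_nonempty A with hAe | _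
  · exfalso
    have h := hpos₁ 1 one_pos
    rw [hAe] at h
    simp at h
  obtain ⟨r, hr, hrA⟩ := hA.exists_r
  have hmS : Measurable (suprA A) := measurable_suprA hA hr hrA
  have hmY₁ : Measurable fun ω => suprA A (X₁ ω) := hmS.comp hX₁
  have hmY₂ : Measurable fun ω => suprA A (X₂ ω) := hmS.comp hX₂
  have hmY : Measurable fun ω => suprA A (X₁ ω + X₂ ω) := hmS.comp (hX₁.add hX₂)
  set ν₁ := FA P A X₁ with hν₁def
  set ν₂ := FA P A X₂ with hν₂def
  set ν := FA P A (fun ω => X₁ ω + X₂ ω) with hνdef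
  haveI hPν₁ : IsProbabilityMeasure ν₁ := Measure.isProbabilityMeasure_map hmY₁.aemeasurable
  haveI hPν₂ : IsProbabilityMeasure ν₂ := Measure.isProbabilityMeasure_map hmY₂.aemeasurable
  haveI hPν : IsProbabilityMeasure ν := Measure.isProbabilityMeasure_map hmY.aemeasurable
  -- positivity of the tails of ν₁, ν₂
  have htpos : ∀ (X : Ω → Fin d → ℝ), Measurable X →
      (∀ x : ℝ, 0 < x → 0 < P {ω | X ω ∈ x • A}) → ∀ x : ℝ, 0 < mTail (FA P A X) x := by
    intro X hX hp x
    haveI : IsProbabilityMeasure (FA P A X) := Measure.isProbabilityMeasure_map (hmS.comp hX).aemeasurable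
    have hx1 : (0:ℝ) < max x 1 := lt_of_lt_of_le one_pos (le_max_right _ _)
    have h1 : 0 < mTail (FA P A X) (max x 1) := by
      rw [mTail_FA hX hmS]
      have hset : {ω | X ω ∈ (max x 1) • A} = {ω | max x 1 < suprA A (X ω)} := by
        ext ω
        exact mem_smul_iff_lt_suprA hA hr hrA hx1
      have := hp (max x 1) hx1
      rw [hset] at this
      exact ENNReal.toReal_pos this.ne' (measure_ne_top P _)
    exact lt_of_lt_of_le h1 (mTail_anti _ (le_max_left x 1))
  have ht₁pos : ∀ x : ℝ, 0 < mTail ν₁ x := htpos X₁ hX₁ hpos₁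
  have ht₂pos : ∀ x : ℝ, 0 < mTail ν₂ x := htpos X₂ hX₂ hpos₂
  -- long-tailedness of ν₁, ν₂
  have h₁L : MemL ν₁ := memL_of_memS ν₁ (FA_Iio_zero hX₁ hmS) ht₁pos h₁A.1
  have h₂L : MemL ν₂ := memL_of_memS ν₂ (FA_Iio_zero hX₂ hmS) ht₂pos h₂A.1
  -- independence
  have hindY : IndepFun (fun ω => suprA A (X₁ ω)) (fun ω => suprA A (X₂ ω)) P :=
    hind.comp hmS hmS
  have hprod : P.map (fun ω => (suprA A (X₁ ω), suprA A (X₂ ω))) = ν₁.prod ν₂ :=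
    (indepFun_iff_map_prod_eq_prod_map_map hmY₁.aemeasurable hmY₂.aemeasurable).mp hindY
  -- upper bound: tail of ν dominated by convolution tail
  have hub : ∀ x : ℝ, mTail ν x ≤ mTail (mConv ν₁ ν₂) x := by
    intro x
    have h1 : mTail ν x = (P {ω | x < suprA A (X₁ ω + X₂ ω)}).toReal :=
      mTail_FA (hX₁.add hX₂) hmS x
    have hsub : {ω | x < suprA A (X₁ ω + X₂ ω)}
        ⊆ {ω | x < suprA A (X₁ ω) + suprA A (X₂ ω)} :=
      fun ω hω => lt_of_lt_of_le hω (suprA_add_le hA hr hrA _ _)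
    have hms : MeasurableSet {p : ℝ × ℝ | x < p.1 + p.2} :=
      measurableSet_lt measurable_const (measurable_fst.add measurable_snd)
    have h2 : P {ω | x < suprA A (X₁ ω) + suprA A (X₂ ω)}
        = (ν₁.prod ν₂) {p : ℝ × ℝ | x < p.1 + p.2} := by
      rw [← hprod, Measure.map_apply (hmY₁.prodMk hmY₂) hms]
      rfl
    rw [h1, mTail, mConv_apply_Ioi, ← h2]
    exact ENNReal.toReal_mono (measure_ne_top _ _) (measure_mono hsub)
  set T : ℝ → ℝ := fun x => mTail ν₁ x + mTail ν₂ x with hTdef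
  have hTpos : ∀ x : ℝ, 0 < T x := fun x => add_pos (ht₁pos x) (ht₂pos x)
  have hcore := conv_tail_equiv ν₁ ν₂ (FA_Iio_zero hX₁ hmS) (FA_Iio_zero hX₂ hmS)
    h₁D h₂D h₁L h₂L (Eventually.of_forall ht₁pos) (Eventually.of_forall ht₂pos)
  -- lower bound
  have hlow : ∀ ε : ℝ, 0 < ε → ε < 1 → ∀ᶠ x in atTop, 1 - 2*ε ≤ mTail ν x / T x := by
    intro ε hε0 hε1
    have hnormtend : ∀ (X : Ω → Fin d → ℝ), Measurable X →
        Tendsto (fun M => (P {ω | M < ‖X ω‖}).toReal) atTop (𝓝 0) := by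
      intro X hX
      haveI : IsProbabilityMeasure (P.map (fun ω => ‖X ω‖)) :=
        Measure.isProbabilityMeasure_map hX.norm.aemeasurable
      have h1 : ∀ M : ℝ, (P {ω | M < ‖X ω‖}).toReal = mTail (P.map (fun ω => ‖X ω‖)) M := by
        intro M
        rw [mTail, Measure.map_apply hX.norm measurableSet_Ioi]
        rfl
      exact (tendsto_mTail_atTop (P.map (fun ω => ‖X ω‖))).congr (fun M => (h1 M).symm)
    obtain ⟨M, hM₁, hM₂, hM1⟩ : ∃ M : ℝ, (P {ω | M < ‖X₁ ω‖}).toReal ≤ ε ∧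
        (P {ω | M < ‖X₂ ω‖}).toReal ≤ ε ∧ 1 ≤ M := by
      have e := (((hnormtend X₁ hX₁).eventually_le_const hε0).and
        (((hnormtend X₂ hX₂).eventually_le_const hε0).and (eventually_ge_atTop (1:ℝ)))).exists
      obtain ⟨M, h⟩ := e
      exact ⟨M, h.1, h.2.1, h.2.2⟩
    set K := M / r with hKdef
    have hK0 : 0 < K := div_pos (lt_of_lt_of_le one_pos hM1) hr
    -- pointwise inequality
    have hptw : ∀ x : ℝ, (1 - ε - mTail ν₂ (x + K)) * (mTail ν₁ (x + K) + mTail ν₂ (x + K))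
        ≤ mTail ν x := by
      intro x
      set s : Set (Fin d → ℝ) := suprA A ⁻¹' Set.Ioi (x + K) with hsdef
      have hs : MeasurableSet s := hmS measurableSet_Ioi
      set g : Set (Fin d → ℝ) := {z | ‖z‖ ≤ M} with hgdef
      have hgm : MeasurableSet g := measurableSet_le measurable_norm measurable_const
      set E₁ := X₁ ⁻¹' s ∩ X₂ ⁻¹' g with hE₁def
      set E₂ := X₁ ⁻¹' g ∩ X₂ ⁻¹' s with hE₂def
      have hE₁m : MeasurableSet E₁ := (hX₁ hs).inter (hX₂ hgm)
      have hE₂m : MeasurableSet E₂ := (hX₁ hgm).inter (hX₂ hs)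
      have hnormK : ∀ z : Fin d → ℝ, z ∈ g → ‖z‖ / r ≤ K := by
        intro z hz
        have hz' : ‖z‖ ≤ M := hz
        rw [hKdef]
        exact (div_le_div_iff_of_pos_right hr).2 hz'
      have hE₁sub : E₁ ⊆ {ω | x < suprA A (X₁ ω + X₂ ω)} := by
        rintro ω ⟨h1, h2⟩
        have hlb := suprA_sub_le hA hr hrA (X₁ ω) (X₂ ω)
        have h1' : x + K < suprA A (X₁ ω) := h1
        have h2' : ‖X₂ ω‖ / r ≤ K := hnormK _ h2
        simp only [Set.mem_setOf_eq]
        linarith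
      have hE₂sub : E₂ ⊆ {ω | x < suprA A (X₁ ω + X₂ ω)} := by
        rintro ω ⟨h1, h2⟩
        have hlb := suprA_sub_le hA hr hrA (X₂ ω) (X₁ ω)
        rw [add_comm] at hlb
        have h2' : x + K < suprA A (X₂ ω) := h2
        have h1' : ‖X₁ ω‖ / r ≤ K := hnormK _ h1
        simp only [Set.mem_setOf_eq]
        linarith
      have hPE₁ : P E₁ = P (X₁ ⁻¹' s) * P (X₂ ⁻¹' g) :=
        hind.measure_inter_preimage_eq_mul s g hs hgm
      have hPE₂ : P E₂ = P (X₁ ⁻¹' g) * P (X₂ ⁻¹' s) :=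
        hind.measure_inter_preimage_eq_mul g s hgm hs
      have hPIle : P (E₁ ∩ E₂) ≤ P (X₁ ⁻¹' s) * P (X₂ ⁻¹' s) := by
        rw [← hind.measure_inter_preimage_eq_mul s s hs hs]
        apply measure_mono
        rintro ω ⟨⟨ha, _⟩, ⟨_, hb⟩⟩
        exact ⟨ha, hb⟩
      -- real versions
      have ht₁' : (P (X₁ ⁻¹' s)).toReal = mTail ν₁ (x + K) := (mTail_FA hX₁ hmS (x + K)).symm
      have ht₂' : (P (X₂ ⁻¹' s)).toReal = mTail ν₂ (x + K) := (mTail_FA hX₂ hmS (x + K)).symm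
      have hg₁ : 1 - ε ≤ (P (X₁ ⁻¹' g)).toReal := by
        rw [prob_toReal_compl (hX₁ hgm)]
        have hc : (X₁ ⁻¹' g)ᶜ = {ω | M < ‖X₁ ω‖} := by
          ext ω
          simp [hgdef, not_le]
        rw [hc]
        linarith
      have hg₂ : 1 - ε ≤ (P (X₂ ⁻¹' g)).toReal := by
        rw [prob_toReal_compl (hX₂ hgm)]
        have hc : (X₂ ⁻¹' g)ᶜ = {ω | M < ‖X₂ ω‖} := by
          ext ω
          simp [hgdef, not_le]
        rw [hc]
        linarith
      have hun : (P (E₁ ∪ E₂)).toReal + (P (E₁ ∩ E₂)).toReal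
          = (P E₁).toReal + (P E₂).toReal := by
        rw [← ENNReal.toReal_add (by finiteness) (by finiteness),
          ← ENNReal.toReal_add (by finiteness) (by finiteness),
          measure_union_add_inter E₁ hE₂m]
      have hUle : (P (E₁ ∪ E₂)).toReal ≤ mTail ν x := by
        rw [mTail_FA (show Measurable fun ω => X₁ ω + X₂ ω from hX₁.add hX₂) hmS x]
        exact ENNReal.toReal_mono (measure_ne_top P _)
          (measure_mono (Set.union_subset hE₁sub hE₂sub))
      have hIle : (P (E₁ ∩ E₂)).toReal ≤ mTail ν₁ (x + K) * mTail ν₂ (x + K) := by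
        have := ENNReal.toReal_mono (by finiteness) hPIle
        rwa [ENNReal.toReal_mul, ht₁', ht₂'] at this
      have hE₁ge : (1 - ε) * mTail ν₁ (x + K) ≤ (P E₁).toReal := by
        rw [hPE₁, ENNReal.toReal_mul, ht₁']
        rw [mul_comm ((1:ℝ) - ε)]
        exact mul_le_mul_of_nonneg_left hg₂ (mTail_nonneg _ _)
      have hE₂ge : (1 - ε) * mTail ν₂ (x + K) ≤ (P E₂).toReal := by
        rw [hPE₂, ENNReal.toReal_mul, ht₂']
        exact mul_le_mul_of_nonneg_right hg₁ (mTail_nonneg _ _)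
      nlinarith [mTail_nonneg ν₁ (x + K), mTail_nonneg ν₂ (x + K),
        sq_nonneg (mTail ν₂ (x + K))]
    have hQ : Tendsto (fun x => (mTail ν₁ (x + K) + mTail ν₂ (x + K)) / T x) atTop (𝓝 1) :=
      tendsto_sum_div_sum (memL_shift h₁L hK0) (memL_shift h₂L hK0)
        (Eventually.of_forall ht₁pos) (Eventually.of_forall ht₂pos)
    have ht₂shift : Tendsto (fun x => mTail ν₂ (x + K)) atTop (𝓝 0) := by
      have := (tendsto_mTail_atTop ν₂).comp (tendsto_atTop_add_const_right atTop K tendsto_id)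
      simpa [Function.comp_def] using this
    have hΦ : Tendsto (fun x => (1 - ε - mTail ν₂ (x + K))
        * ((mTail ν₁ (x + K) + mTail ν₂ (x + K)) / T x)) atTop (𝓝 (1 - ε)) := by
      have h := ((tendsto_const_nhds :
          Tendsto (fun _ : ℝ => (1:ℝ) - ε) atTop (𝓝 (1 - ε))).sub ht₂shift).mul hQ
      rw [sub_zero, mul_one] at h
      exact h
    filter_upwards [hΦ.eventually_const_le (by linarith : 1 - 2*ε < 1 - ε)] with x hx
    refine le_trans hx ?_
    rw [mul_div_assoc']
    exact (div_le_div_iff_of_pos_right (hTpos x)).2 (hptw x)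
  -- main asymptotic
  have H : Tendsto (fun x => mTail ν x / T x) atTop (𝓝 1) := by
    rw [tendsto_order]
    constructor
    · intro c hc
      set ε := min ((1 - c)/3) (1/2) with hεdef
      have hε0 : 0 < ε := lt_min (by linarith) (by norm_num)
      have hε1 : ε < 1 := lt_of_le_of_lt (min_le_right _ _) (by norm_num)
      filter_upwards [hlow ε hε0 hε1] with x hx
      have h3 : ε ≤ (1 - c)/3 := min_le_left _ _
      have : c < 1 - 2*ε := by linarith
      linarith
    · intro c hc
      filter_upwards [hcore.eventually_lt_const hc] with x hx
      refine lt_of_le_of_lt ?_ hx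
      exact (div_le_div_iff_of_pos_right (hTpos x)).2 (hub x)
  have hνpos : ∀ᶠ x in atTop, 0 < mTail ν x := by
    filter_upwards [hlow (1/4) (by norm_num) (by norm_num)] with x hx
    have h1 := (le_div_iff₀ (hTpos x)).1 (by linarith : (1:ℝ)/2 ≤ mTail ν x / T x)
    have hTx : 0 < T x := hTpos x
    exact lt_of_lt_of_le (mul_pos (by norm_num : (0:ℝ) < 1/2) hTx) h1
  have hloε : ∀ ε : ℝ, 0 < ε → ε < 1 →
      ∀ᶠ x in atTop, (1 - ε) * T x ≤ mTail ν x := by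
    intro ε hε0 hε1
    filter_upwards [hlow (ε/2) (by linarith) (by linarith)] with x hx
    have hx' : 1 - ε ≤ mTail ν x / T x := by linarith
    exact (le_div_iff₀ (hTpos x)).1 hx'
  have hupε : ∀ ε : ℝ, 0 < ε → ∀ᶠ x in atTop, mTail ν x ≤ (1 + ε) * T x := by
    intro ε hε0
    filter_upwards [H.eventually_le_const (by linarith : (1:ℝ) < 1 + ε)] with x hx
    exact (div_le_iff₀ (hTpos x)).1 hx
  -- MemD
  have hD : MemD ν := by
    intro y hy0 hy1
    obtain ⟨C₁, hC₁ge, hC₁⟩ := memD_mul h₁D hy0 hy1 (Eventually.of_forall ht₁pos)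
    obtain ⟨C₂, hC₂ge, hC₂⟩ := memD_mul h₂D hy0 hy1 (Eventually.of_forall ht₂pos)
    refine ⟨4 * max C₁ C₂, ?_⟩
    have hyx : Tendsto (fun x : ℝ => y * x) atTop atTop :=
      Tendsto.const_mul_atTop hy0 tendsto_id
    filter_upwards [hC₁, hC₂, hloε (1/2) (by norm_num) (by norm_num),
      hyx.eventually (hupε 1 one_pos)] with x e1 e2 e3 e4
    have hCmax : (0:ℝ) < max C₁ C₂ := lt_of_lt_of_le one_pos (le_trans hC₁ge (le_max_left _ _))
    have hνx : 0 < mTail ν x := lt_of_lt_of_le (mul_pos (by norm_num) (hTpos x)) e3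
    rw [div_le_iff₀ hνx]
    have hTyx : T (y * x) ≤ max C₁ C₂ * T x := by
      have g1 := mul_le_mul_of_nonneg_right (le_max_left C₁ C₂) (mTail_nonneg ν₁ x)
      have g2 := mul_le_mul_of_nonneg_right (le_max_right C₁ C₂) (mTail_nonneg ν₂ x)
      have : max C₁ C₂ * T x = max C₁ C₂ * mTail ν₁ x + max C₁ C₂ * mTail ν₂ x := by
        simp only [hTdef]; ring
      rw [this]
      simp only [hTdef]
      linarith
    calc mTail ν (y * x) ≤ (1 + 1) * T (y * x) := e4
    _ ≤ (1 + 1) * (max C₁ C₂ * T x) := mul_le_mul_of_nonneg_left hTyx (by norm_num)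
    _ = (4 * max C₁ C₂) * ((1 - 1/2) * T x) := by ring
    _ ≤ (4 * max C₁ C₂) * mTail ν x :=
        mul_le_mul_of_nonneg_left e3 (by linarith [hCmax])
  -- MemPD
  have hPD : MemPD ν := by
    intro b hb
    obtain ⟨c₁, hc₁, hc₁ev⟩ := h₁A.2 b hb
    obtain ⟨c₂, hc₂, hc₂ev⟩ := h₂A.2 b hb
    set c := max (max c₁ c₂) 0 with hcdef
    have hc0 : (0:ℝ) ≤ c := le_max_right _ _
    have hcl1 : c < 1 := max_lt (max_lt hc₁ hc₂) one_pos
    set ε := (1 - c)/4 with hεdef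
    have hε0 : 0 < ε := by rw [hεdef]; linarith
    have hε1 : ε < 1 := by rw [hεdef]; linarith
    have hden : (0:ℝ) < 1 - ε := by linarith
    refine ⟨(1 + ε) * c / (1 - ε), ?_, ?_⟩
    · rw [div_lt_one hden]
      nlinarith [mul_le_mul_of_nonneg_left hcl1.le hε0.le]
    · have hb0 : (0:ℝ) < b := lt_trans one_pos hb
      have hbx : Tendsto (fun x : ℝ => b * x) atTop atTop :=
        Tendsto.const_mul_atTop hb0 tendsto_id
      filter_upwards [hbx.eventually (hupε ε hε0), hloε ε hε0 hε1, hc₁ev, hc₂ev]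
        with x e1 e2 e3 e4
      have f1 : mTail ν₁ (b * x) ≤ c₁ * mTail ν₁ x := (div_le_iff₀ (ht₁pos x)).1 e3
      have f2 : mTail ν₂ (b * x) ≤ c₂ * mTail ν₂ x := (div_le_iff₀ (ht₂pos x)).1 e4
      have g1 : c₁ * mTail ν₁ x ≤ c * mTail ν₁ x :=
        mul_le_mul_of_nonneg_right (le_trans (le_max_left _ _) (le_max_left _ _))
          (mTail_nonneg _ _)
      have g2 : c₂ * mTail ν₂ x ≤ c * mTail ν₂ x :=
        mul_le_mul_of_nonneg_right (le_trans (le_max_right _ _) (le_max_left _ _))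
          (mTail_nonneg _ _)
      have hT' : T (b * x) ≤ c * T x := by
        have : c * T x = c * mTail ν₁ x + c * mTail ν₂ x := by simp only [hTdef]; ring
        rw [this]
        simp only [hTdef]
        linarith
      have hνx : 0 < mTail ν x := lt_of_lt_of_le (mul_pos hden (hTpos x)) e2
      rw [div_le_iff₀ hνx]
      calc mTail ν (b * x) ≤ (1 + ε) * T (b * x) := e1
      _ ≤ (1 + ε) * (c * T x) := mul_le_mul_of_nonneg_left hT' (by linarith)
      _ = ((1 + ε) * c / (1 - ε)) * ((1 - ε) * T x) := by field_simp
      _ ≤ ((1 + ε) * c / (1 - ε)) * mTail ν x := by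
          apply mul_le_mul_of_nonneg_left e2
          exact div_nonneg (mul_nonneg (by linarith) hc0) hden.le
  -- MemL for ν
  have hνL : MemL ν := by
    intro a ha
    have h1 : Tendsto (fun x => mTail ν (x - a) / T (x - a)) atTop (𝓝 1) := by
      have h' := H.comp (tendsto_atTop_add_const_right atTop (-a) tendsto_id)
      have heq : ((fun x => mTail ν x / T x) ∘ fun x => id x + -a)
          = fun x => mTail ν (x - a) / T (x - a) := by
        funext x
        simp [Function.comp, sub_eq_add_neg]
      rwa [heq] at h'
    have h2 : Tendsto (fun x => T (x - a) / T x) atTop (𝓝 1) :=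
      tendsto_sum_div_sum (h₁L a ha) (h₂L a ha)
        (Eventually.of_forall ht₁pos) (Eventually.of_forall ht₂pos)
    have h3 : Tendsto (fun x => T x / mTail ν x) atTop (𝓝 1) := by
      have h' := H.inv₀ one_ne_zero
      simp only [inv_div, inv_one] at h'
      exact h'
    have hmul := (h1.mul h2).mul h3
    rw [show ((1:ℝ) * 1) * 1 = 1 by norm_num] at hmul
    apply hmul.congr'
    filter_upwards [hνpos] with x hx
    have hT1 : T (x - a) ≠ 0 := (hTpos (x - a)).ne'
    have hT2 : T x ≠ 0 := (hTpos x).ne'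
    field_simp
  -- MemS for ν
  have hν0 : ν (Set.Iio 0) = 0 := FA_Iio_zero (hX₁.add hX₂) hmS
  have hS : MemS ν := by
    have happly := conv_tail_equiv ν ν hν0 hν0 hD hD hνL hνL hνpos hνpos
    have h2 := happly.const_mul (2:ℝ)
    rw [mul_one] at h2
    apply h2.congr
    intro x
    have key : ∀ m q : ℝ, 2 * (q / (m + m)) = q / m := by
      intro m q
      rcases eq_or_ne m 0 with h | h
      · simp [h]
      · have hm2 : m + m ≠ 0 := fun hc => h (by linarith)
        field_simp
        ring
    exact key _ _
  -- assemble
  refine ⟨?_, hD, hS, hPD⟩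
  apply H.congr'
  filter_upwards [eventually_gt_atTop (0:ℝ)] with x hx
  have hnum : mTail ν x = (P {ω | X₁ ω + X₂ ω ∈ x • A}).toReal := by
    rw [mTail_FA (show Measurable fun ω => X₁ ω + X₂ ω from hX₁.add hX₂) hmS x]
    have hset : {ω | X₁ ω + X₂ ω ∈ x • A} = {ω | x < suprA A (X₁ ω + X₂ ω)} := by
      ext ω
      exact mem_smul_iff_lt_suprA hA hr hrA hx
    rw [hset]
  have hden₁ : mTail ν₁ x = vTail P A X₁ x := by
    rw [mTail_FA hX₁ hmS x, vTail]
    have hset : {ω | X₁ ω ∈ x • A} = {ω | x < suprA A (X₁ ω)} := by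
      ext ω
      exact mem_smul_iff_lt_suprA hA hr hrA hx
    rw [hset]
  have hden₂ : mTail ν₂ x = vTail P A X₂ x := by
    rw [mTail_FA hX₂ hmS x, vTail]
    have hset : {ω | X₂ ω ∈ x • A} = {ω | x < suprA A (X₂ ω)} := by
      ext ω
      exact mem_smul_iff_lt_suprA hA hr hrA hx
    rw [hset]
  simp only [hTdef]
  rw [hnum, hden₁, hden₂]


end Paper
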